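/- Let q be odd and χ a nontrivial character of (F_q,+). For (x,y,t) ∈ H(W), W = F_q^{2n}, define the operator ρ(x,y,t) on the q^n-dimensional space of functions f : F_q^n → ℂ by (ρ(x,y,t)f)(u) = χ(t + x·u − ½ x·y)·f(u − y). Then ρ is a group homomorphism from H(W) into the invertible operators on this space, and the resulting (Schrödinger model) representation is irreducible with central character χ. -/

import Mathlib

/-!
STATEMENT 2: The Schrödinger model: the explicit operators
(ρ(x,y,t)f)(u) = χ(t + x·u − ½ x·y)·f(u − y) define a representation of the
Heisenberg group H(W), W = F_q^{2n}, which is irreducible with central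
character χ.
-/

open Matrix

set_option linter.unusedSectionVars false

namespace Stmt2

/-- The standard symplectic form on `W = F^n × F^n`:
`⟨(x,y),(x',y')⟩ = x·y' − y·x'`. -/
def symp {F : Type} [Field F] {n : ℕ} (u v : (Fin n → F) × (Fin n → F)) : F :=
  u.1 ⬝ᵥ v.2 - u.2 ⬝ᵥ v.1

/-- The Heisenberg group `H(W) = W ⊕ F` attached to `W = F^n × F^n`, with
product `(w,t)·(w',t') = (w + w', t + t' + ½⟨w,w'⟩)`. -/
@[ext]
structure Heis (F : Type) [Field F] (n : ℕ) where
  w : (Fin n → F) × (Fin n → F)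
  t : F

namespace Heis

variable {F : Type} [Field F] {n : ℕ}

instance : Mul (Heis F n) :=
  ⟨fun a b => ⟨a.w + b.w, a.t + b.t + (2 : F)⁻¹ * symp a.w b.w⟩⟩

instance : One (Heis F n) := ⟨⟨0, 0⟩⟩

instance : Inv (Heis F n) := ⟨fun a => ⟨-a.w, -a.t⟩⟩

lemma mul_w (a b : Heis F n) : (a * b).w = a.w + b.w := rfl
lemma mul_t (a b : Heis F n) : (a * b).t = a.t + b.t + (2 : F)⁻¹ * symp a.w b.w := rfl
lemma one_w : (1 : Heis F n).w = 0 := rfl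
lemma one_t : (1 : Heis F n).t = 0 := rfl
lemma inv_w (a : Heis F n) : (a⁻¹).w = -a.w := rfl
lemma inv_t (a : Heis F n) : (a⁻¹).t = -a.t := rfl

lemma symp_self (u : (Fin n → F) × (Fin n → F)) : symp u u = 0 := by
  simp [symp, dotProduct_comm]

instance : Group (Heis F n) where
  mul_assoc a b c := by
    refine Heis.ext ?_ ?_
    · simp [mul_w, add_assoc]
    · simp only [mul_t, mul_w, symp, Prod.fst_add, Prod.snd_add,
        add_dotProduct, dotProduct_add]
      ring
  one_mul a := by
    refine Heis.ext ?_ ?_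
    · simp [mul_w, one_w]
    · simp [mul_t, one_w, one_t, symp]
  mul_one a := by
    refine Heis.ext ?_ ?_
    · simp [mul_w, one_w]
    · simp [mul_t, one_w, one_t, symp]
  inv_mul_cancel a := by
    refine Heis.ext ?_ ?_
    · simp [mul_w, inv_w, one_w]
    · have h : symp (-a.w) a.w = 0 := by
        simp only [symp, Prod.fst_neg, Prod.snd_neg, neg_dotProduct]
        rw [dotProduct_comm]
        ring
      simp [mul_t, inv_w, inv_t, one_t, h]

end Heis

/-- A representation `ρ` of the Heisenberg group has central character `χ` if
the central element `(0,t)` acts by the scalar `χ t`. -/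
def HasCentralChar {F : Type} [Field F] {n : ℕ} {V : Type} [AddCommGroup V] [Module ℂ V]
    (ρ : Representation ℂ (Heis F n) V) (χ : AddChar F ℂ) : Prop :=
  ∀ t : F, ∀ v : V, ρ ⟨0, t⟩ v = χ t • v

/-- Irreducibility of a representation: the space is nonzero, and the only
invariant subspaces are `⊥` and `⊤`. -/
def IsIrred {G : Type} [Group G] {V : Type} [AddCommGroup V] [Module ℂ V]
    (ρ : Representation ℂ G V) : Prop :=
  (∃ v : V, v ≠ 0) ∧
    ∀ p : Submodule ℂ V, (∀ g : G, ∀ v ∈ p, ρ g v ∈ p) → p = ⊥ ∨ p = ⊤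

/-- The Schrödinger-model operator attached to `h = (x,y,t) ∈ H(W)`:
`(ρ(x,y,t) f)(u) = χ(t + x·u − ½ x·y) · f(u − y)`. -/
noncomputable def schrodinger {F : Type} [Field F] {n : ℕ} (χ : AddChar F ℂ)
    (h : Heis F n) : ((Fin n → F) → ℂ) →ₗ[ℂ] ((Fin n → F) → ℂ) where
  toFun f := fun u => χ (h.t + h.w.1 ⬝ᵥ u - (2 : F)⁻¹ * (h.w.1 ⬝ᵥ h.w.2)) * f (u - h.w.2)
  map_add' := by
    intro f g
    funext u
    simp [mul_add]
  map_smul' := by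
    intro c f
    funext u
    simp only [Pi.smul_apply, smul_eq_mul, RingHom.id_apply]
    ring

section Aux

variable {F : Type} [Field F] {n : ℕ}

/-- The additive monoid hom `x ↦ x ⬝ᵥ v`. -/
def dotHom (v : Fin n → F) : (Fin n → F) →+ F where
  toFun x := x ⬝ᵥ v
  map_zero' := zero_dotProduct v
  map_add' a b := add_dotProduct a b v

lemma sum_char_dot [Fintype F] (χ : AddChar F ℂ) (hχ : χ ≠ 1) (v : Fin n → F)
    (hv : v ≠ 0) : ∑ x : Fin n → F, χ (x ⬝ᵥ v) = 0 := by
  classical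
  have hne : (χ.compAddMonoidHom (dotHom v)) ≠ 0 := by
    rw [AddChar.ne_zero_iff]
    obtain ⟨c, hc⟩ := AddChar.ne_one_iff.mp hχ
    obtain ⟨i, hi⟩ : ∃ i, v i ≠ 0 := by
      by_contra h; push_neg at h; exact hv (funext h)
    refine ⟨Pi.single i (c * (v i)⁻¹), ?_⟩
    have : (Pi.single i (c * (v i)⁻¹) : Fin n → F) ⬝ᵥ v = c := by
      rw [single_dotProduct, mul_assoc, inv_mul_cancel₀ hi, mul_one]
    simpa [dotHom, AddChar.compAddMonoidHom_apply, this] using hc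
  simpa [dotHom] using AddChar.sum_eq_zero_iff_ne_zero.mpr hne

lemma schrod_apply (χ : AddChar F ℂ) (h : Heis F n) (f : (Fin n → F) → ℂ)
    (u : Fin n → F) :
    schrodinger χ h f u
      = χ (h.t + h.w.1 ⬝ᵥ u - (2 : F)⁻¹ * (h.w.1 ⬝ᵥ h.w.2)) * f (u - h.w.2) := rfl

lemma schrod_mul (h2 : (2 : F) ≠ 0) (χ : AddChar F ℂ) (a b : Heis F n) :
    schrodinger χ (a * b) = schrodinger χ a ∘ₗ schrodinger χ b := by
  apply LinearMap.ext; intro f; funext u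
  rw [LinearMap.comp_apply, schrod_apply, schrod_apply, schrod_apply,
    ← mul_assoc, ← AddChar.map_add_eq_mul]
  have harg : (u : Fin n → F) - (a * b).w.2 = u - a.w.2 - b.w.2 := by
    show u - (a.w.2 + b.w.2) = _
    rw [sub_add_eq_sub_sub]
  rw [harg]
  congr 1
  apply congrArg
  show a.t + b.t + (2 : F)⁻¹ * symp a.w b.w + (a.w.1 + b.w.1) ⬝ᵥ u
      - (2 : F)⁻¹ * ((a.w.1 + b.w.1) ⬝ᵥ (a.w.2 + b.w.2)) = _
  simp only [symp, add_dotProduct, dotProduct_add, dotProduct_sub]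
  rw [dotProduct_comm a.w.2 b.w.1]
  field_simp
  ring

lemma schrod_one (χ : AddChar F ℂ) : schrodinger χ (1 : Heis F n) = LinearMap.id := by
  apply LinearMap.ext; intro f; funext u
  rw [schrod_apply]
  show χ (0 + (0 : Fin n → F) ⬝ᵥ u - (2 : F)⁻¹ * ((0 : Fin n → F) ⬝ᵥ (0 : Fin n → F)))
      * f (u - 0) = f u
  simp

end Aux

/-- the Schrödinger operators define a homomorphism from
`H(W)` into the invertible operators, and the resulting representation is
irreducible with central character `χ`. -/
theorem schrodinger_model
    (F : Type) [Field F] [Fintype F] (hodd : Odd (Fintype.card F))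
    (n : ℕ) (χ : AddChar F ℂ) (hχ : χ ≠ 1) :
    ∃ ρ : Representation ℂ (Heis F n) ((Fin n → F) → ℂ),
      (∀ h : Heis F n, ρ h = schrodinger χ h) ∧
      IsIrred ρ ∧ HasCentralChar ρ χ := by
  classical
  have h2 : (2 : F) ≠ 0 := Ring.two_ne_zero (by
    intro h
    have h0 := FiniteField.even_card_iff_char_two.mp h
    have h1 := Nat.odd_iff.mp hodd
    omega)
  set ρ : Representation ℂ (Heis F n) ((Fin n → F) → ℂ) :=
    { toFun := schrodinger χ,
      map_one' := schrod_one χ,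
      map_mul' := fun a b =>
        (schrod_mul h2 χ a b).trans (Module.End.mul_eq_comp _ _).symm } with hρdef
  have hρ : ∀ h : Heis F n, ρ h = schrodinger χ h := fun h => rfl
  refine ⟨ρ, hρ, ⟨⟨fun _ => 1, fun hcon => one_ne_zero (congrFun hcon 0)⟩, ?_⟩, ?_⟩
  · -- only invariant subspaces are ⊥ and ⊤
    intro p hp
    rw [or_iff_not_imp_left]
    intro hpbot
    have hp' : ∀ g : Heis F n, ∀ v ∈ p, schrodinger χ g v ∈ p := by
      intro g v hv
      have := hp g v hv
      rwa [hρ] at this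
    obtain ⟨f, hfp, hf0⟩ := (Submodule.ne_bot_iff p).mp hpbot
    obtain ⟨u0, hu0⟩ : ∃ u0, f u0 ≠ 0 := by
      by_contra h; push_neg at h; exact hf0 (funext h)
    set δ : (Fin n → F) → ((Fin n → F) → ℂ) :=
      fun a u => if u = a then 1 else 0 with hδdef
    -- the averaged element
    set g0 : (Fin n → F) → ℂ :=
      ∑ x : Fin n → F, χ (-(x ⬝ᵥ u0)) • schrodinger χ ⟨(x, 0), 0⟩ f with hg0def
    have hg0mem : g0 ∈ p :=
      Submodule.sum_mem _ fun x _ =>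
        Submodule.smul_mem _ _ (hp' ⟨(x, 0), 0⟩ f hfp)
    have hterm : ∀ x u : Fin n → F,
        (χ (-(x ⬝ᵥ u0)) • schrodinger χ ⟨(x, 0), 0⟩ f) u
          = χ (x ⬝ᵥ (u - u0)) * f u := by
      intro x u
      rw [Pi.smul_apply, smul_eq_mul, schrod_apply]
      show χ (-(x ⬝ᵥ u0)) * (χ (0 + x ⬝ᵥ u - (2 : F)⁻¹ * (x ⬝ᵥ 0)) * f (u - 0)) = _
      rw [← mul_assoc, ← AddChar.map_add_eq_mul, sub_zero]
      congr 1
      apply congrArg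
      rw [dotProduct_sub, dotProduct_zero]
      ring
    have hgval : ∀ u, g0 u
        = if u = u0 then ((Fintype.card (Fin n → F) : ℂ) * f u0) else 0 := by
      intro u
      rw [hg0def, Finset.sum_apply]
      simp only [hterm]
      by_cases h : u = u0
      · subst h
        simp only [sub_self, dotProduct_zero, AddChar.map_zero_eq_one, one_mul,
          Finset.sum_const, Finset.card_univ, nsmul_eq_mul, if_pos rfl, if_true]
      · rw [if_neg h, ← Finset.sum_mul,
          sum_char_dot χ hχ (u - u0) (sub_ne_zero.mpr h), zero_mul]
    have hc : ((Fintype.card (Fin n → F) : ℂ) * f u0) ≠ 0 :=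
      mul_ne_zero (Nat.cast_ne_zero.mpr Fintype.card_ne_zero) hu0
    have hδ0 : δ u0 ∈ p := by
      have heq : δ u0 = ((Fintype.card (Fin n → F) : ℂ) * f u0)⁻¹ • g0 := by
        funext u
        rw [Pi.smul_apply, hgval u, smul_eq_mul]
        by_cases h : u = u0
        · show (if u = u0 then (1 : ℂ) else 0) = _
          rw [if_pos h, if_pos h, inv_mul_cancel₀ hc]
        · show (if u = u0 then (1 : ℂ) else 0) = _
          rw [if_neg h, if_neg h, mul_zero]
      rw [heq]
      exact Submodule.smul_mem _ _ hg0mem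
    have hδall : ∀ a : Fin n → F, δ a ∈ p := by
      intro a
      have heq : δ a = schrodinger χ ⟨(0, a - u0), 0⟩ (δ u0) := by
        funext u
        rw [schrod_apply]
        show (if u = a then (1 : ℂ) else 0)
          = χ (0 + (0 : Fin n → F) ⬝ᵥ u - (2 : F)⁻¹ * ((0 : Fin n → F) ⬝ᵥ (a - u0)))
            * (if u - (a - u0) = u0 then (1 : ℂ) else 0)
        have hiff : (u - (a - u0) = u0) ↔ (u = a) := by
          constructor
          · intro h
            have := sub_eq_iff_eq_add.mp h
            rw [this]; abel
          · intro h; subst h; abel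
        simp [hiff]
      rw [heq]
      exact hp' _ _ hδ0
    rw [Submodule.eq_top_iff']
    intro g
    have heq : g = ∑ a : Fin n → F, g a • δ a := by
      funext u
      rw [Finset.sum_apply]
      simp only [Pi.smul_apply, hδdef, smul_eq_mul, mul_ite, mul_one, mul_zero]
      rw [Finset.sum_ite_eq]
      simp
    rw [heq]
    exact Submodule.sum_mem _ fun a _ => Submodule.smul_mem _ _ (hδall a)
  · -- central character
    intro t v
    rw [hρ]
    funext u
    rw [schrod_apply]
    show χ (t + (0 : Fin n → F) ⬝ᵥ u - (2 : F)⁻¹ * ((0 : Fin n → F) ⬝ᵥ (0 : Fin n → F)))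
        * v (u - 0) = (χ t • v) u
    simp

end Stmt2
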